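/- For the finite-horizon stochastic control problem minimizing E[ε Σ_{t=0}^{T-1} u_t² + x_T²] subject to x_{t+1} = x_t + u_t + w_{t+1}, the optimal feedback strategy is γ_t*(x) = -x/(T - t + ε). -/

import Mathlib

open MeasureTheory ProbabilityTheory

/-- The state trajectory generated by the dynamics
`x 0 = w 0`, `x (t+1) = x t + u t + w (t+1)`. -/
def stateTraj {Ω : Type*} (w u : ℕ → Ω → ℝ) : ℕ → Ω → ℝ
  | 0 => w 0
  | t + 1 => fun ω => stateTraj w u t ω + u t ω + w (t + 1) ω

/-- Completion-of-squares algebraic identity for the Riccati step. -/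
private lemma alg_key (ε β x u v : ℝ) (hβ : β ≠ 0) (hβ1 : β + 1 ≠ 0) :
    ε * u ^ 2 + ε / β * (x + u + v) ^ 2
      = ε / (β + 1) * x ^ 2 + (ε + ε / β) * (u + x / (β + 1)) ^ 2
        + 2 * (ε / β) * ((x + u) * v) + ε / β * v ^ 2 := by
  field_simp
  ring

/-- For the finite-horizon stochastic control problem minimizing
`E[ε Σ_{t=0}^{T-1} u_t² + x_T²]` subject to `x_{t+1} = x_t + u_t + w_{t+1}`,
`x_0 = w_0`, with independent square-integrable mean-zero noises, the feedback
strategy `γ_t*(x) = -x/(T - t + ε)` is optimal among all non-anticipative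
square-integrable controls. -/
theorem optimal_feedback_strategy
    {Ω : Type*} [MeasurableSpace Ω] (P : Measure Ω) [IsProbabilityMeasure P]
    (T : ℕ) (hT : 1 ≤ T) (ε : ℝ) (hε : 0 < ε)
    (w : ℕ → Ω → ℝ)
    (hwmeas : ∀ t, Measurable (w t))
    (hindep : iIndepFun w P)
    (hw2 : ∀ t, MemLp (w t) 2 P)
    (hmean : ∀ t, ∫ ω, w t ω ∂P = 0)
    (F : ℕ → MeasurableSpace Ω)
    (hF : ∀ t, F t = ⨆ s ∈ Finset.range (t + 1), MeasurableSpace.comap (w s) inferInstance)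
    (xstar ustar : ℕ → Ω → ℝ)
    (hx0 : xstar 0 = w 0)
    (hustar : ∀ t, ustar t = fun ω => -(xstar t ω) / ((T : ℝ) - t + ε))
    (hxrec : ∀ t, xstar (t + 1) = fun ω => xstar t ω + ustar t ω + w (t + 1) ω) :
    ∀ u : ℕ → Ω → ℝ,
      (∀ t, t < T → Measurable[F t] (u t)) →
      (∀ t, t < T → MemLp (u t) 2 P) →
      ∫ ω, (ε * ∑ t ∈ Finset.range T, (ustar t ω) ^ 2 + (stateTraj w ustar T ω) ^ 2) ∂P
        ≤ ∫ ω, (ε * ∑ t ∈ Finset.range T, (u t ω) ^ 2 + (stateTraj w u T ω) ^ 2) ∂P := by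
  intro u hu hu2
  -- Riccati coefficients
  set b : ℕ → ℝ := fun t => (T : ℝ) - t + ε with hbdef
  set a : ℕ → ℝ := fun t => ε / b t with hadef
  have hbpos : ∀ t, t ≤ T → 0 < b t := by
    intro t ht
    have h1 : (t : ℝ) ≤ T := Nat.cast_le.mpr ht
    show 0 < (T : ℝ) - t + ε
    linarith
  have hbsucc : ∀ t, b t = b (t + 1) + 1 := by
    intro t
    show (T : ℝ) - t + ε = ((T : ℝ) - (t + 1 : ℕ) + ε) + 1
    push_cast
    ring
  have haT : a T = 1 := by
    show ε / ((T : ℝ) - T + ε) = 1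
    rw [sub_self, zero_add, div_self hε.ne']
  -- filtration facts
  have hFle : ∀ t, F t ≤ ‹MeasurableSpace Ω› := by
    intro t
    rw [hF]
    exact iSup₂_le fun s _ => measurable_iff_comap_le.mp (hwmeas s)
  have hwFt : ∀ s t, s ≤ t → Measurable[F t] (w s) := by
    intro s t hst
    rw [measurable_iff_comap_le, hF]
    exact le_iSup₂ (f := fun s (_ : s ∈ Finset.range (t + 1)) =>
      MeasurableSpace.comap (w s) inferInstance) s (Finset.mem_range.mpr (Nat.lt_succ_of_le hst))
  have hFmono : ∀ t, F t ≤ F (t + 1) := by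
    intro t
    rw [hF, hF]
    exact iSup₂_le fun s hs => le_iSup₂ (f := fun s (_ : s ∈ Finset.range (t + 2)) =>
      MeasurableSpace.comap (w s) inferInstance) s
      (Finset.mem_range.mpr (lt_trans (Finset.mem_range.mp hs) (Nat.lt_succ_self _)))
  -- independence of F t and w (t+1)
  have hindepF : ∀ t, Indep (F t) (MeasurableSpace.comap (w (t + 1)) inferInstance) P := by
    intro t
    have hdisj : Disjoint {s : ℕ | s < t + 1} ({t + 1} : Set ℕ) := by
      simp only [Set.disjoint_left, Set.mem_setOf_eq, Set.mem_singleton_iff]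
      intro s hs hs'
      omega
    have h := indep_iSup_of_disjoint
      (m := fun i => MeasurableSpace.comap (w i) inferInstance)
      (fun i => measurable_iff_comap_le.mp (hwmeas i)) hindep.iIndep hdisj
    have h1 : (⨆ i ∈ ({t + 1} : Set ℕ), MeasurableSpace.comap (w i) inferInstance)
        = MeasurableSpace.comap (w (t + 1)) inferInstance := by
      simp
    have h2 : F t = ⨆ i ∈ {s : ℕ | s < t + 1}, MeasurableSpace.comap (w i) inferInstance := by
      rw [hF]
      apply le_antisymm
      · exact iSup₂_le fun s hs => le_iSup₂ (f := fun s (_ : s ∈ {s : ℕ | s < t + 1}) =>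
          MeasurableSpace.comap (w s) inferInstance) s (Finset.mem_range.mp hs)
      · exact iSup₂_le fun s hs => le_iSup₂ (f := fun s (_ : s ∈ Finset.range (t + 1)) =>
          MeasurableSpace.comap (w s) inferInstance) s (Finset.mem_range.mpr hs)
    rw [h2, ← h1]
    exact h
  -- key identity for an arbitrary admissible control
  have key : ∀ v : ℕ → Ω → ℝ, (∀ t, t < T → Measurable[F t] (v t)) →
      (∀ t, t < T → MemLp (v t) 2 P) →
      ∫ ω, (ε * ∑ t ∈ Finset.range T, (v t ω) ^ 2 + (stateTraj w v T ω) ^ 2) ∂P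
        = (a 0 * ∫ ω, (w 0 ω) ^ 2 ∂P
            + ∑ t ∈ Finset.range T, a (t + 1) * ∫ ω, (w (t + 1) ω) ^ 2 ∂P)
          + ∑ t ∈ Finset.range T,
              (ε + a (t + 1)) * ∫ ω, (v t ω + stateTraj w v t ω / b t) ^ 2 ∂P := by
    intro v hv hv2
    set x : ℕ → Ω → ℝ := stateTraj w v with hxdef
    have hxsucc : ∀ t, x (t + 1) = fun ω => x t ω + v t ω + w (t + 1) ω := fun t => rfl
    have hxmeas : ∀ t, t ≤ T → Measurable[F t] (x t) := by
      intro t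
      induction t with
      | zero => exact fun _ => hwFt 0 0 le_rfl
      | succ t ih =>
        intro ht
        have h1 : Measurable[F (t + 1)] (x t) :=
          (ih (le_of_lt ht)).mono (hFmono t) le_rfl
        have h2 : Measurable[F (t + 1)] (v t) :=
          (hv t ht).mono (hFmono t) le_rfl
        rw [hxsucc t]
        exact (h1.add h2).add (hwFt (t + 1) (t + 1) le_rfl)
    have hx2 : ∀ t, t ≤ T → MemLp (x t) 2 P := by
      intro t
      induction t with
      | zero => exact fun _ => hw2 0
      | succ t ih =>
        intro ht
        rw [hxsucc t]
        exact (((ih (le_of_lt ht)).add (hv2 t ht)).add (hw2 (t + 1)))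
    have hq2 : ∀ t, t < T → MemLp (fun ω => v t ω + x t ω / b t) 2 P := by
      intro t ht
      have h1 : (fun ω => x t ω / b t) = fun ω => (b t)⁻¹ * x t ω := by
        funext ω; rw [div_eq_inv_mul]
      have h2 : MemLp (fun ω => x t ω / b t) 2 P := by
        rw [h1]; exact (hx2 t ht.le).const_mul _
      exact (hv2 t ht).add h2
    -- one dynamic-programming step
    have step : ∀ t, t < T →
        ε * ∫ ω, (v t ω) ^ 2 ∂P + a (t + 1) * ∫ ω, (x (t + 1) ω) ^ 2 ∂P
          = a t * ∫ ω, (x t ω) ^ 2 ∂P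
            + (ε + a (t + 1)) * ∫ ω, (v t ω + x t ω / b t) ^ 2 ∂P
            + a (t + 1) * ∫ ω, (w (t + 1) ω) ^ 2 ∂P := by
      intro t ht
      have hb' : 0 < b (t + 1) := hbpos (t + 1) ht
      have hβ : b (t + 1) ≠ 0 := hb'.ne'
      have hβ1 : b (t + 1) + 1 ≠ 0 := by
        rw [← hbsucc t]; exact (hbpos t ht.le).ne'
      -- pointwise identity
      have hpt : ∀ ω, ε * (v t ω) ^ 2 + a (t + 1) * (x (t + 1) ω) ^ 2
          = a t * (x t ω) ^ 2 + (ε + a (t + 1)) * (v t ω + x t ω / b t) ^ 2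
            + 2 * a (t + 1) * ((x t ω + v t ω) * w (t + 1) ω)
            + a (t + 1) * (w (t + 1) ω) ^ 2 := by
        intro ω
        have halg := alg_key ε (b (t + 1)) (x t ω) (v t ω) (w (t + 1) ω) hβ hβ1
        have hx1 : x (t + 1) ω = x t ω + v t ω + w (t + 1) ω := rfl
        have ha1 : a (t + 1) = ε / b (t + 1) := rfl
        have ha2 : a t = ε / (b (t + 1) + 1) := by
          show ε / b t = _
          rw [hbsucc t]
        have hb2 : b t = b (t + 1) + 1 := hbsucc t
        rw [hx1, ha1, ha2, hb2]
        linarith [halg]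
      -- integrability
      have hXm : Measurable[F t] (fun ω => x t ω + v t ω) :=
        (hxmeas t ht.le).add (hv t ht)
      have hIF : IndepFun (fun ω => x t ω + v t ω) (w (t + 1)) P := by
        rw [IndepFun_iff_Indep]
        exact indep_of_indep_of_le_left (hindepF t) (measurable_iff_comap_le.mp hXm)
      have hXi : Integrable (fun ω => x t ω + v t ω) P :=
        ((hx2 t ht.le).add (hv2 t ht)).integrable one_le_two
      have hwi : Integrable (w (t + 1)) P := (hw2 (t + 1)).integrable one_le_two
      have Iu : Integrable (fun ω => (v t ω) ^ 2) P := (hv2 t ht).integrable_sq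
      have Ix : Integrable (fun ω => (x t ω) ^ 2) P := (hx2 t ht.le).integrable_sq
      have Ix' : Integrable (fun ω => (x (t + 1) ω) ^ 2) P := (hx2 (t + 1) ht).integrable_sq
      have Iq : Integrable (fun ω => (v t ω + x t ω / b t) ^ 2) P := (hq2 t ht).integrable_sq
      have Iw : Integrable (fun ω => (w (t + 1) ω) ^ 2) P := (hw2 (t + 1)).integrable_sq
      have Ic : Integrable (fun ω => (x t ω + v t ω) * w (t + 1) ω) P :=
        hIF.integrable_mul hXi hwi
      -- vanishing cross term
      have hcross : ∫ ω, (x t ω + v t ω) * w (t + 1) ω ∂P = 0 := by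
        have h := hIF.integral_mul_eq_mul_integral hXi.aestronglyMeasurable hwi.aestronglyMeasurable
        calc ∫ ω, (x t ω + v t ω) * w (t + 1) ω ∂P
            = (∫ ω, (x t ω + v t ω) ∂P) * ∫ ω, w (t + 1) ω ∂P := h
          _ = 0 := by rw [hmean (t + 1), mul_zero]
      calc ε * ∫ ω, (v t ω) ^ 2 ∂P + a (t + 1) * ∫ ω, (x (t + 1) ω) ^ 2 ∂P
          = ∫ ω, (ε * (v t ω) ^ 2 + a (t + 1) * (x (t + 1) ω) ^ 2) ∂P := by
            rw [integral_add (Iu.const_mul ε) (Ix'.const_mul (a (t + 1))),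
              integral_const_mul, integral_const_mul]
        _ = ∫ ω, (a t * (x t ω) ^ 2 + (ε + a (t + 1)) * (v t ω + x t ω / b t) ^ 2
              + 2 * a (t + 1) * ((x t ω + v t ω) * w (t + 1) ω)
              + a (t + 1) * (w (t + 1) ω) ^ 2) ∂P :=
            integral_congr_ae (Filter.Eventually.of_forall hpt)
        _ = a t * ∫ ω, (x t ω) ^ 2 ∂P
              + (ε + a (t + 1)) * ∫ ω, (v t ω + x t ω / b t) ^ 2 ∂P
              + 2 * a (t + 1) * ∫ ω, (x t ω + v t ω) * w (t + 1) ω ∂P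
              + a (t + 1) * ∫ ω, (w (t + 1) ω) ^ 2 ∂P := by
            have IA : Integrable (fun ω => a t * (x t ω) ^ 2) P := Ix.const_mul _
            have IB : Integrable (fun ω => (ε + a (t + 1)) * (v t ω + x t ω / b t) ^ 2) P :=
              Iq.const_mul _
            have IC : Integrable
                (fun ω => 2 * a (t + 1) * ((x t ω + v t ω) * w (t + 1) ω)) P :=
              Ic.const_mul _
            have ID : Integrable (fun ω => a (t + 1) * (w (t + 1) ω) ^ 2) P := Iw.const_mul _
            have IAB : Integrable (fun ω => a t * (x t ω) ^ 2
                + (ε + a (t + 1)) * (v t ω + x t ω / b t) ^ 2) P := IA.add IB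
            have IABC : Integrable (fun ω => a t * (x t ω) ^ 2
                + (ε + a (t + 1)) * (v t ω + x t ω / b t) ^ 2
                + 2 * a (t + 1) * ((x t ω + v t ω) * w (t + 1) ω)) P := IAB.add IC
            have e1 : ∫ ω, (a t * (x t ω) ^ 2
                + (ε + a (t + 1)) * (v t ω + x t ω / b t) ^ 2
                + 2 * a (t + 1) * ((x t ω + v t ω) * w (t + 1) ω)
                + a (t + 1) * (w (t + 1) ω) ^ 2) ∂P
                = (∫ ω, (a t * (x t ω) ^ 2
                    + (ε + a (t + 1)) * (v t ω + x t ω / b t) ^ 2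
                    + 2 * a (t + 1) * ((x t ω + v t ω) * w (t + 1) ω)) ∂P)
                  + ∫ ω, a (t + 1) * (w (t + 1) ω) ^ 2 ∂P := integral_add IABC ID
            have e2 : ∫ ω, (a t * (x t ω) ^ 2
                + (ε + a (t + 1)) * (v t ω + x t ω / b t) ^ 2
                + 2 * a (t + 1) * ((x t ω + v t ω) * w (t + 1) ω)) ∂P
                = (∫ ω, (a t * (x t ω) ^ 2
                    + (ε + a (t + 1)) * (v t ω + x t ω / b t) ^ 2) ∂P)
                  + ∫ ω, 2 * a (t + 1) * ((x t ω + v t ω) * w (t + 1) ω) ∂P :=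
              integral_add IAB IC
            have e3 : ∫ ω, (a t * (x t ω) ^ 2
                + (ε + a (t + 1)) * (v t ω + x t ω / b t) ^ 2) ∂P
                = (∫ ω, a t * (x t ω) ^ 2 ∂P)
                  + ∫ ω, (ε + a (t + 1)) * (v t ω + x t ω / b t) ^ 2 ∂P :=
              integral_add IA IB
            rw [e1, e2, e3,
              integral_const_mul, integral_const_mul, integral_const_mul, integral_const_mul]
        _ = a t * ∫ ω, (x t ω) ^ 2 ∂P
              + (ε + a (t + 1)) * ∫ ω, (v t ω + x t ω / b t) ^ 2 ∂P
              + a (t + 1) * ∫ ω, (w (t + 1) ω) ^ 2 ∂P := by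
            rw [hcross]; ring
    -- telescoping sum
    have main : ε * (∑ t ∈ Finset.range T, ∫ ω, (v t ω) ^ 2 ∂P)
        + (a T * ∫ ω, (x T ω) ^ 2 ∂P - a 0 * ∫ ω, (x 0 ω) ^ 2 ∂P)
        = ∑ t ∈ Finset.range T, ((ε + a (t + 1)) * ∫ ω, (v t ω + x t ω / b t) ^ 2 ∂P
            + a (t + 1) * ∫ ω, (w (t + 1) ω) ^ 2 ∂P) := by
      rw [Finset.mul_sum,
        ← Finset.sum_range_sub (fun t => a t * ∫ ω, (x t ω) ^ 2 ∂P),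
        ← Finset.sum_add_distrib]
      exact Finset.sum_congr rfl fun t ht => by
        have h := step t (Finset.mem_range.mp ht)
        linarith
    -- total cost
    have hsum_int : Integrable (fun ω => ∑ t ∈ Finset.range T, (v t ω) ^ 2) P :=
      integrable_finset_sum _ fun t ht => (hv2 t (Finset.mem_range.mp ht)).integrable_sq
    have hcost : ∫ ω, (ε * ∑ t ∈ Finset.range T, (v t ω) ^ 2 + (x T ω) ^ 2) ∂P
        = ε * (∑ t ∈ Finset.range T, ∫ ω, (v t ω) ^ 2 ∂P) + ∫ ω, (x T ω) ^ 2 ∂P := by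
      rw [integral_add (hsum_int.const_mul ε) ((hx2 T le_rfl).integrable_sq),
        integral_const_mul,
        integral_finset_sum _ fun t ht => (hv2 t (Finset.mem_range.mp ht)).integrable_sq]
    rw [hcost]
    rw [haT, one_mul] at main
    have hx0i : ∫ ω, (x 0 ω) ^ 2 ∂P = ∫ ω, (w 0 ω) ^ 2 ∂P := rfl
    rw [hx0i] at main
    rw [Finset.sum_add_distrib] at main
    linarith
  -- admissibility of the optimal strategy
  have hxstar_meas : ∀ t, Measurable[F t] (xstar t) := by
    intro t
    induction t with
    | zero => rw [hx0]; exact hwFt 0 0 le_rfl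
    | succ t ih =>
      have h1 : Measurable[F (t + 1)] (xstar t) := ih.mono (hFmono t) le_rfl
      have h2 : Measurable[F (t + 1)] (ustar t) := by
        rw [hustar t]; exact h1.neg.div_const _
      rw [hxrec t]
      exact (h1.add h2).add (hwFt (t + 1) (t + 1) le_rfl)
  have hxstar2 : ∀ t, MemLp (xstar t) 2 P := by
    intro t
    induction t with
    | zero => rw [hx0]; exact hw2 0
    | succ t ih =>
      have h2 : MemLp (ustar t) 2 P := by
        rw [hustar t]
        have heq : (fun ω => -(xstar t ω) / ((T : ℝ) - t + ε))
            = fun ω => (-((T : ℝ) - t + ε)⁻¹) * xstar t ω := by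
          funext ω; ring
        rw [heq]
        exact ih.const_mul _
      rw [hxrec t]
      exact ((ih.add h2).add (hw2 (t + 1)))
  have hustar_meas : ∀ t, t < T → Measurable[F t] (ustar t) := by
    intro t _
    rw [hustar t]
    exact (hxstar_meas t).neg.div_const _
  have hustar2 : ∀ t, t < T → MemLp (ustar t) 2 P := by
    intro t _
    rw [hustar t]
    have heq : (fun ω => -(xstar t ω) / ((T : ℝ) - t + ε))
        = fun ω => (-((T : ℝ) - t + ε)⁻¹) * xstar t ω := by
      funext ω; ring
    rw [heq]
    exact (hxstar2 t).const_mul _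
  have hxstar_eq : ∀ t, stateTraj w ustar t = xstar t := by
    intro t
    induction t with
    | zero => exact hx0.symm
    | succ t ih =>
      funext ω
      show stateTraj w ustar t ω + ustar t ω + w (t + 1) ω = xstar (t + 1) ω
      rw [hxrec t, ih]
  rw [key u hu hu2, key ustar hustar_meas hustar2]
  -- the optimal strategy makes the penalty terms vanish
  have hzero : ∑ t ∈ Finset.range T,
      (ε + a (t + 1)) * ∫ ω, (ustar t ω + stateTraj w ustar t ω / b t) ^ 2 ∂P = 0 := by
    apply Finset.sum_eq_zero
    intro t _
    have hz : ∀ ω, (ustar t ω + stateTraj w ustar t ω / b t) ^ 2 = 0 := by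
      intro ω
      rw [congrFun (hxstar_eq t) ω, congrFun (hustar t) ω]
      show (-(xstar t ω) / ((T : ℝ) - t + ε) + xstar t ω / ((T : ℝ) - t + ε)) ^ 2 = 0
      ring
    simp only [hz, integral_zero, mul_zero]
  rw [hzero, add_zero]
  refine le_add_of_nonneg_right (Finset.sum_nonneg fun t ht => ?_)
  have hb' : 0 < b (t + 1) := hbpos (t + 1) (Finset.mem_range.mp ht)
  have ha' : (0 : ℝ) < a (t + 1) := div_pos hε hb'
  exact mul_nonneg (by linarith) (integral_nonneg fun ω => sq_nonneg _)
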